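/- arXiv:1408.0900 — 2 statements merged into one kernel-verified Lean document; each statement's English description precedes it below -/
import Mathlib

section
/- Let K be a complete non-archimedean valued field, f : U → K^m analytic on an open set U ⊆ K^l × K^m with f(a,b) = 0, and suppose the m×m matrix A_y of partial derivatives of f with respect to the last m variables at (a,b) is invertible. Then there exist open neighborhoods U_1 ∋ a, U_2 ∋ b and a unique analytic map g : U_1 → U_2 with g(a) = b, f(x, g(x)) = 0 for all x ∈ U_1, and Dg(x) = −A_y(x,g(x))^{−1}·A_x(x,g(x)) on U_1. -/
open ContinuousLinearMap

section aux
variable {K : Type*} [NontriviallyNormedField K] [CompleteSpace K]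
  {X Y : Type*} [NormedAddCommGroup X] [NormedSpace K X] [CompleteSpace X]
  [NormedAddCommGroup Y] [NormedSpace K Y] [CompleteSpace Y]

lemma splitCLM {G : Type*} [NormedAddCommGroup G] [NormedSpace K G]
    (B : X × Y →L[K] G) (x : X) (y : Y) :
    B (x, y) = B.comp (inl K X Y) x + B.comp (inr K X Y) y := by
  simp only [comp_apply, inl_apply, inr_apply, ← map_add, Prod.mk_add_mk, add_zero, zero_add]

theorem aux_ift (f : X × Y → Y) (U : Set (X × Y)) (hU : IsOpen U)
    (hf : AnalyticOnNhd K f U) (a : X) (b : Y) (hab : (a, b) ∈ U) (hfab : f (a, b) = 0)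
    (hAy : IsUnit ((fderiv K f (a, b)).comp (inr K X Y))) :
    ∃ (U₁ : Set X) (U₂ : Set Y), IsOpen U₁ ∧ IsOpen U₂ ∧ a ∈ U₁ ∧ b ∈ U₂ ∧
      ∃ g : X → Y,
        AnalyticOnNhd K g U₁ ∧ g a = b ∧
        (∀ x ∈ U₁, g x ∈ U₂ ∧ f (x, g x) = 0) ∧
        (∀ x ∈ U₁, ∀ y ∈ U₂, f (x, y) = 0 → y = g x) ∧
        (∀ x ∈ U₁, fderiv K g x =
          -(Ring.inverse ((fderiv K f (x, g x)).comp (inr K X Y))).comp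
            ((fderiv K f (x, g x)).comp (inl K X Y))) ∧
        (∀ g' : X → Y, AnalyticOnNhd K g' U₁ → g' a = b →
          (∀ x ∈ U₁, g' x ∈ U₂ ∧ f (x, g' x) = 0) → Set.EqOn g g' U₁) := by
  classical
  obtain ⟨u, hu⟩ := hAy
  set F : X × Y → X × Y := fun z => (z.1, f z) with hFdef
  have hFan : AnalyticOnNhd K F U := fun z hz => analyticAt_fst.prod (hf z hz)
  have hFz₀ : AnalyticAt K F (a, b) := hFan _ hab
  have huinv : ∀ y : Y, (↑u⁻¹ : Y →L[K] Y) ((u : Y →L[K] Y) y) = y := fun y => by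
    simp [← ContinuousLinearMap.mul_apply]
  have huinv' : ∀ y : Y, (u : Y →L[K] Y) ((↑u⁻¹ : Y →L[K] Y) y) = y := fun y => by
    simp [← ContinuousLinearMap.mul_apply]
  set A : X × Y →L[K] Y := fderiv K f (a, b) with hA
  set Φf : X × Y →L[K] X × Y := (fst K X Y).prod A with hΦf
  set Φg : X × Y →L[K] X × Y := (fst K X Y).prod
      ((↑u⁻¹ : Y →L[K] Y).comp ((snd K X Y) - (A.comp (inl K X Y)).comp (fst K X Y))) with hΦg
  have hgf : Function.LeftInverse Φg Φf := by
    rintro ⟨x, y⟩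
    refine Prod.ext (by simp [hΦg, hΦf]) ?_
    show (↑u⁻¹ : Y →L[K] Y) (A (x, y) - A.comp (inl K X Y) x) = y
    rw [splitCLM A x y, ← hu]
    simpa using huinv y
  have hfg : Function.RightInverse Φg Φf := by
    rintro ⟨x, w⟩
    refine Prod.ext (by simp [hΦg, hΦf]) ?_
    show A (x, (↑u⁻¹ : Y →L[K] Y) (w - A.comp (inl K X Y) x)) = w
    rw [splitCLM A x _, ← hu, huinv']
    abel
  set Φ : (X × Y) ≃L[K] (X × Y) := ContinuousLinearEquiv.equivOfInverse Φf Φg hgf hfg with hΦ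
  have hΦcoe : (Φ : (X × Y) →L[K] (X × Y)) = Φf := rfl
  have hdF : fderiv K F (a, b) = Φf := by
    rw [hFdef]
    rw [DifferentiableAt.fderiv_prodMk differentiableAt_fst (hf _ hab).differentiableAt]
    rw [hΦf, hA, fderiv_fst]
  have hstrict : HasStrictFDerivAt F (Φ : (X × Y) →L[K] (X × Y)) (a, b) := by
    rw [hΦcoe, ← hdF]; exact hFz₀.hasStrictFDerivAt
  -- the local homeomorphism given by the inverse function theorem
  set φ : OpenPartialHomeomorph (X × Y) (X × Y) := HasStrictFDerivAt.toOpenPartialHomeomorph F hstrict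
    with hφdef
  have hφcoe : ⇑φ = F := hstrict.toOpenPartialHomeomorph_coe
  have hz₀src : (a, b) ∈ φ.source := hstrict.mem_toOpenPartialHomeomorph_source
  have hφab : φ (a, b) = (a, (0 : Y)) := by
    rw [hφcoe]; simp [hFdef, hfab]
  -- power series of the inverse
  obtain ⟨p, hp⟩ := hFz₀
  have hp1 : p 1 = (continuousMultilinearCurryFin1 K (X × Y) (X × Y)).symm Φ := by
    have h1 : continuousMultilinearCurryFin1 K (X × Y) (X × Y) (p 1)
        = (Φ : (X × Y) →L[K] X × Y) := by
      rw [← hp.fderiv_eq, hdF]; exact hΦcoe.symm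
    rw [← h1]; simp
  have hφp : HasFPowerSeriesAt (⇑φ) p (a, b) := by rw [hφcoe]; exact hp
  have hsymm : AnalyticAt K (⇑φ.symm) (a, (0 : Y)) := by
    rw [← hφab]
    exact ⟨_, φ.hasFPowerSeriesAt_symm hz₀src hφp hp1⟩
  obtain ⟨V, hVsub, hVopen, hVmem⟩ := mem_nhds_iff.1 hsymm.eventually_analyticAt
  -- the open set where the y-block of the derivative is invertible
  set Ω : Set (X × Y) := U ∩ (fun z => (fderiv K f z).comp (inr K X Y)) ⁻¹' {w | IsUnit w}
    with hΩdef
  have hΩopen : IsOpen Ω := by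
    have hcont : ContinuousOn (fun z => (fderiv K f z).comp (inr K X Y)) U :=
      (hf.fderiv.continuousOn).clm_comp continuousOn_const
    exact hcont.isOpen_inter_preimage hU Units.isOpen
  have hz₀Ω : (a, b) ∈ Ω := ⟨hab, ⟨u, hu⟩⟩
  -- a product neighborhood inside φ.source ∩ Ω
  obtain ⟨P, Q, hPopen, haP, hQopen, hbQ, hPQ⟩ := mem_nhds_prod_iff'.1
    ((φ.open_source.inter hΩopen).mem_nhds ⟨hz₀src, hz₀Ω⟩)
  -- the good target set
  set T : Set (X × Y) := (φ.target ∩ φ.symm ⁻¹' (P ×ˢ Q)) ∩ V with hTdef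
  have hTopen : IsOpen T := (φ.isOpen_inter_preimage_symm (hPopen.prod hQopen)).inter hVopen
  have haT : (a, (0 : Y)) ∈ T := by
    refine ⟨⟨hφab ▸ φ.map_source hz₀src, ?_⟩, hVmem⟩
    rw [Set.mem_preimage, ← hφab, φ.left_inv hz₀src]
    exact ⟨haP, hbQ⟩
  -- the implicit function
  set g : X → Y := fun x => (φ.symm (x, (0 : Y))).2 with hgdef
  set U₁ : Set X := (fun x => (x, (0 : Y))) ⁻¹' T with hU₁def
  have hU₁open : IsOpen U₁ := hTopen.preimage (continuous_id.prodMk continuous_const)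
  have haU₁ : a ∈ U₁ := haT
  -- key facts about points of U₁
  have hkey : ∀ x ∈ U₁, x ∈ P ∧ g x ∈ Q ∧ (x, g x) ∈ Ω ∧ f (x, g x) = 0 ∧
      φ.symm (x, (0 : Y)) = (x, g x) := by
    intro x hx
    obtain ⟨⟨hxt, hxPQ⟩, _hxV⟩ := hx
    set z : X × Y := φ.symm (x, (0 : Y)) with hzdef
    have hzsrc : z ∈ φ.source := φ.map_target hxt
    have hzr : φ z = (x, (0 : Y)) := φ.right_inv hxt
    have hzF : (z.1, f z) = (x, (0 : Y)) := by rw [← hzr, hφcoe]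
    have hz1 : z.1 = x := congrArg Prod.fst hzF
    have hzz : z = (x, g x) := by rw [hgdef]; exact Prod.ext hz1 rfl
    have hmem : z ∈ P ×ˢ Q := hxPQ
    refine ⟨hz1 ▸ hmem.1, ?_, ?_, ?_, hzz⟩
    · have := hmem.2; rwa [hzz] at this
    · have := (hPQ hmem).2; rwa [hzz] at this
    · have := congrArg Prod.snd hzF; rwa [hzz] at this
  have hga : g a = b := by
    have : φ.symm (a, (0 : Y)) = (a, b) := by rw [← hφab, φ.left_inv hz₀src]
    rw [hgdef]; simp [this]
  -- analyticity of g on U₁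
  have hgan : AnalyticOnNhd K g U₁ := by
    intro x hx
    have h1 : AnalyticAt K (⇑φ.symm) (x, (0 : Y)) := hVsub hx.2
    have h2 : AnalyticAt K (fun x : X => (x, (0 : Y))) x :=
      (analyticAt_id).prod analyticAt_const
    exact analyticAt_snd.comp (AnalyticAt.comp (f := fun x : X => (x, (0 : Y))) h1 h2)
  -- derivative formula
  have hderiv : ∀ x ∈ U₁, fderiv K g x =
      -(Ring.inverse ((fderiv K f (x, g x)).comp (inr K X Y))).comp
        ((fderiv K f (x, g x)).comp (inl K X Y)) := by
    intro x₀ hx₀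
    obtain ⟨-, -, hΩx, -, -⟩ := hkey x₀ hx₀
    obtain ⟨hUx, hUnit⟩ := hΩx
    obtain ⟨v, hv0⟩ := hUnit
    have hv : (v : Y →L[K] Y) = (fderiv K f (x₀, g x₀)).comp (inr K X Y) := hv0
    set Ax := (fderiv K f (x₀, g x₀)).comp (inl K X Y) with hAx
    set Ay := (fderiv K f (x₀, g x₀)).comp (inr K X Y) with hAyy
    set Dg := fderiv K g x₀ with hDg
    have hgd : HasFDerivAt g Dg x₀ := ((hgan x₀ hx₀).differentiableAt).hasFDerivAt
    have hfd : HasFDerivAt f (fderiv K f (x₀, g x₀)) (x₀, g x₀) :=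
      ((hf _ hUx).differentiableAt).hasFDerivAt
    have hpair : HasFDerivAt (fun x : X => (x, g x))
        ((ContinuousLinearMap.id K X).prod Dg) x₀ := (hasFDerivAt_id x₀).prodMk hgd
    have hcomp : HasFDerivAt (fun x : X => f (x, g x))
        ((fderiv K f (x₀, g x₀)).comp ((ContinuousLinearMap.id K X).prod Dg)) x₀ :=
      hfd.comp x₀ hpair
    have hzero : (fderiv K f (x₀, g x₀)).comp ((ContinuousLinearMap.id K X).prod Dg) = 0 := by
      have hev : (fun x : X => f (x, g x)) =ᶠ[nhds x₀] fun _ => (0 : Y) :=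
        Filter.eventually_of_mem (hU₁open.mem_nhds hx₀) fun x hx => (hkey x hx).2.2.2.1
      have h0 : HasFDerivAt (fun _ : X => (0 : Y)) ((0 : X →L[K] Y)) x₀ :=
        hasFDerivAt_const 0 x₀
      exact ((h0.congr_of_eventuallyEq hev).unique hcomp).symm
    have hAxAy : ∀ w : X, Ax w + Ay (Dg w) = 0 := by
      intro w
      have h1 := congrArg (fun T : X →L[K] Y => T w) hzero
      simp only [ContinuousLinearMap.comp_apply, ContinuousLinearMap.prod_apply,
        ContinuousLinearMap.coe_id', id_eq, ContinuousLinearMap.zero_apply] at h1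
      rw [← h1, splitCLM (fderiv K f (x₀, g x₀)) w (Dg w)]
    rw [← hv, Ring.inverse_unit]
    refine ContinuousLinearMap.ext fun w => ?_
    have h2 : Ax w = -(Ay (Dg w)) := eq_neg_of_add_eq_zero_left (hAxAy w)
    simp only [ContinuousLinearMap.neg_apply, ContinuousLinearMap.comp_apply, h2, ← hv,
      map_neg, neg_neg]
    simp [← ContinuousLinearMap.mul_apply]
  -- uniqueness within U₁ × U₂
  have huniq : ∀ x ∈ U₁, ∀ y ∈ Q, f (x, y) = 0 → y = g x := by
    intro x hx y hyQ hfy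
    obtain ⟨hxP, -, -, -, hsymmx⟩ := hkey x hx
    have hmem : (x, y) ∈ φ.source := (hPQ ⟨hxP, hyQ⟩).1
    have hφxy : φ (x, y) = (x, (0 : Y)) := by rw [hφcoe]; simp [hFdef, hfy]
    have := φ.left_inv hmem
    rw [hφxy, hsymmx] at this
    exact (congrArg Prod.snd this).symm
  refine ⟨U₁, Q, hU₁open, hQopen, haU₁, hbQ, g, hgan, hga, ?_, huniq, hderiv, ?_⟩
  · exact fun x hx => ⟨(hkey x hx).2.1, (hkey x hx).2.2.2.1⟩
  · intro g' _ _ hg' x hx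
    exact (huniq x hx (g' x) (hg' x hx).1 (hg' x hx).2).symm



end aux


/-- The block of the total derivative of `f` corresponding to the first `l` variables. -/
noncomputable def blockAx {K : Type*} [NontriviallyNormedField K] {l m : ℕ}
    (f : (Fin l → K) × (Fin m → K) → (Fin m → K))
    (z : (Fin l → K) × (Fin m → K)) : (Fin l → K) →L[K] (Fin m → K) :=
  (fderiv K f z).comp (ContinuousLinearMap.inl K (Fin l → K) (Fin m → K))

/-- The block of the total derivative of `f` corresponding to the last `m` variables. -/
noncomputable def blockAy {K : Type*} [NontriviallyNormedField K] {l m : ℕ}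
    (f : (Fin l → K) × (Fin m → K) → (Fin m → K))
    (z : (Fin l → K) × (Fin m → K)) : (Fin m → K) →L[K] (Fin m → K) :=
  (fderiv K f z).comp (ContinuousLinearMap.inr K (Fin l → K) (Fin m → K))

/-- p-adic implicit function theorem: if `f` is analytic near `(a,b)`, `f(a,b) = 0` and
`A_y(a,b)` is invertible, there are neighborhoods `U₁ ∋ a`, `U₂ ∋ b` and a unique analytic
`g : U₁ → U₂` with `g(a) = b`, `f(x, g(x)) = 0`, and `Dg = −A_y⁻¹ A_x`. -/
theorem padic_implicit_function_theorem (K : Type*) [NontriviallyNormedField K]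
    [CompleteSpace K] (hna : ∀ a b : K, ‖a + b‖ ≤ max ‖a‖ ‖b‖)
    (l m : ℕ) (f : (Fin l → K) × (Fin m → K) → (Fin m → K))
    (U : Set ((Fin l → K) × (Fin m → K))) (hU : IsOpen U)
    (hf : AnalyticOnNhd K f U)
    (a : Fin l → K) (b : Fin m → K) (hab : (a, b) ∈ U) (hfab : f (a, b) = 0)
    (hAy : IsUnit (blockAy f (a, b))) :
    ∃ (U₁ : Set (Fin l → K)) (U₂ : Set (Fin m → K)), IsOpen U₁ ∧ IsOpen U₂ ∧
      a ∈ U₁ ∧ b ∈ U₂ ∧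
      ∃ g : (Fin l → K) → (Fin m → K),
        AnalyticOnNhd K g U₁ ∧ g a = b ∧
        (∀ x ∈ U₁, g x ∈ U₂ ∧ f (x, g x) = 0) ∧
        (∀ x ∈ U₁, ∀ y ∈ U₂, f (x, y) = 0 → y = g x) ∧
        (∀ x ∈ U₁, fderiv K g x =
          -(Ring.inverse (blockAy f (x, g x))).comp (blockAx f (x, g x))) ∧
        (∀ g' : (Fin l → K) → (Fin m → K), AnalyticOnNhd K g' U₁ → g' a = b →
          (∀ x ∈ U₁, g' x ∈ U₂ ∧ f (x, g' x) = 0) → Set.EqOn g g' U₁) := by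
  simpa only [blockAx, blockAy] using aux_ift f U hU hf a b hab hfab hAy
end

section
/- (Multivariate analytic Hensel's lemma) Let f = (f_1,...,f_t) with each f_i ∈ Z_p{X_1,...,X_t} a restricted power series, let J_f denote the Jacobian matrix, and let r ≥ 0 be an integer. If a ∈ Z_p^t satisfies det J_f(a) ≠ 0 and v_p(f_i(a)) > 2·v_p(det J_f(a)) + r for all i, then there exists a unique b ∈ Z_p^t with f(b) = 0 and v_p(b_i − a_i) > v_p(det J_f(a)) + r for all i. -/
/-- Evaluation of a multivariate (restricted) power series at a point of `ℤ_pᵗ`. -/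
noncomputable def mvSeriesEval (p : ℕ) [Fact p.Prime] {t : ℕ}
    (f : MvPowerSeries (Fin t) ℤ_[p]) (x : Fin t → ℤ_[p]) : ℤ_[p] :=
  ∑' d : (Fin t →₀ ℕ), MvPowerSeries.coeff d f * ∏ i, x i ^ d i

/-- Formal partial derivative of a multivariate power series. -/
noncomputable def mvSeriesPDeriv (p : ℕ) [Fact p.Prime] {t : ℕ} (j : Fin t)
    (f : MvPowerSeries (Fin t) ℤ_[p]) : MvPowerSeries (Fin t) ℤ_[p] :=
  fun d => ((d j + 1 : ℕ) : ℤ_[p]) *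
    MvPowerSeries.coeff (d + Finsupp.single j 1) f

open Filter Topology IsUltrametricDist

namespace MAHensel

variable {p : ℕ} [Fact p.Prime] {t : ℕ}


lemma norm_le_of_dvd {x y : ℤ_[p]} (h : x ∣ y) : ‖y‖ ≤ ‖x‖ := by
  obtain ⟨c, rfl⟩ := h
  calc ‖x * c‖ ≤ ‖x‖ * ‖c‖ := norm_mul_le _ _
    _ ≤ ‖x‖ * 1 := by
        have := PadicInt.norm_le_one c
        have := norm_nonneg x
        nlinarith
    _ = ‖x‖ := mul_one _

/-- monomial -/
noncomputable def mono (d : Fin t →₀ ℕ) (x : Fin t → ℤ_[p]) : ℤ_[p] := ∏ i, x i ^ d i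

lemma mono_norm_le_one (d : Fin t →₀ ℕ) (x : Fin t → ℤ_[p]) : ‖mono d x‖ ≤ 1 :=
  PadicInt.norm_le_one _

lemma mono_lip (d : Fin t →₀ ℕ) (x y : Fin t → ℤ_[p]) :
    ‖mono d x - mono d y‖ ≤ ‖x - y‖ := by
  have key : ∀ s : Finset (Fin t),
      ‖(∏ i ∈ s, x i ^ d i) - ∏ i ∈ s, y i ^ d i‖ ≤ ‖x - y‖ := by
    intro s
    induction s using Finset.induction_on with
    | empty => simp
    | @insert a s ha ih =>
      rw [Finset.prod_insert ha, Finset.prod_insert ha]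
      have h1 : x a ^ d a * ∏ i ∈ s, x i ^ d i - y a ^ d a * ∏ i ∈ s, y i ^ d i
          = x a ^ d a * ((∏ i ∈ s, x i ^ d i) - ∏ i ∈ s, y i ^ d i)
            + (x a ^ d a - y a ^ d a) * ∏ i ∈ s, y i ^ d i := by ring
      rw [h1]
      refine (norm_add_le_max _ _).trans (max_le ?_ ?_)
      · exact (norm_le_of_dvd (dvd_mul_left _ _)).trans ih
      · refine (norm_le_of_dvd (dvd_mul_right _ _)).trans ?_
        refine (norm_le_of_dvd (sub_dvd_pow_sub_pow _ _ _)).trans ?_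
        simpa using norm_le_pi_norm (x - y) a
  exact key Finset.univ

lemma mono_single_add (j : Fin t) (d : Fin t →₀ ℕ) (x : Fin t → ℤ_[p]) :
    mono (Finsupp.single j 1 + d) x = x j * mono d x := by
  unfold mono
  have h1 : ∀ i, x i ^ ((Finsupp.single j 1 + d : Fin t →₀ ℕ) i) = x i ^ (Finsupp.single j 1) i * x i ^ d i := by
    intro i; rw [Finsupp.add_apply, pow_add]
  rw [Finset.prod_congr rfl fun i _ => h1 i, Finset.prod_mul_distrib]
  congr 1
  simp [Finsupp.single_apply, pow_ite]


noncomputable def linPart (d : Fin t →₀ ℕ) (a w : Fin t → ℤ_[p]) : ℤ_[p] :=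
  ∑ j, (d j : ℤ_[p]) * mono (d - Finsupp.single j 1) a * w j

lemma linPart_norm_le_one (d : Fin t →₀ ℕ) (a w : Fin t → ℤ_[p]) : ‖linPart d a w‖ ≤ 1 :=
  PadicInt.norm_le_one _

lemma sub_single_add (j0 j : Fin t) (hne : j ≠ j0) (d : Fin t →₀ ℕ) :
    Finsupp.single j0 1 + d - Finsupp.single j 1
      = Finsupp.single j0 1 + (d - Finsupp.single j 1) := by
  ext i
  simp only [Finsupp.add_apply, Finsupp.tsub_apply, Finsupp.single_apply]
  by_cases h1 : j = i
  · subst h1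
    rw [if_neg fun h => hne h.symm, if_pos rfl]
    omega
  · rw [if_neg h1]
    split_ifs <;> omega

lemma linPart_single_add (j0 : Fin t) (d : Fin t →₀ ℕ) (a w : Fin t → ℤ_[p]) :
    linPart (Finsupp.single j0 1 + d) a w = a j0 * linPart d a w + mono d a * w j0 := by
  classical
  have key : ∀ j : Fin t,
      (((Finsupp.single j0 1 + d : Fin t →₀ ℕ) j : ℕ) : ℤ_[p]) *
        mono (Finsupp.single j0 1 + d - Finsupp.single j 1) a * w j
      = a j0 * ((d j : ℤ_[p]) * mono (d - Finsupp.single j 1) a * w j)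
        + (if j = j0 then mono d a * w j0 else 0) := by
    intro j
    by_cases hj : j = j0
    · subst hj
      rw [if_pos rfl, add_tsub_cancel_left]
      have hd : (((Finsupp.single j 1 + d : Fin t →₀ ℕ) j : ℕ) : ℤ_[p])
          = (d j : ℤ_[p]) + 1 := by
        simp only [Finsupp.add_apply, Finsupp.single_apply, if_pos rfl]
        push_cast; ring
      rw [hd]
      have hmono : (d j : ℤ_[p]) * mono d a
          = (d j : ℤ_[p]) * (a j * mono (d - Finsupp.single j 1) a) := by
        rcases Nat.eq_zero_or_pos (d j) with h0 | hpos
        · rw [h0]; push_cast; ring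
        · have hdecomp : d = Finsupp.single j 1 + (d - Finsupp.single j 1) := by
            ext i
            simp only [Finsupp.add_apply, Finsupp.tsub_apply, Finsupp.single_apply]
            split_ifs with h
            · subst h; omega
            · omega
          have h2 : mono d a = a j * mono (d - Finsupp.single j 1) a := by
            conv_lhs => rw [hdecomp]
            exact mono_single_add j _ a
          rw [h2]
      linear_combination hmono * w j
    · rw [if_neg hj, sub_single_add j0 j hj, mono_single_add]
      have hd : (((Finsupp.single j0 1 + d : Fin t →₀ ℕ) j : ℕ) : ℤ_[p])
          = (d j : ℤ_[p]) := by
        simp [Finsupp.add_apply, Finsupp.single_apply, Ne.symm hj]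
      rw [hd]; ring
  unfold linPart
  rw [Finset.sum_congr rfl fun j _ => key j, Finset.sum_add_distrib, ← Finset.mul_sum,
    Finset.sum_ite_eq' Finset.univ j0 (fun _ => mono d a * w j0), if_pos (Finset.mem_univ j0)]

lemma exists_decomp (d : Fin t →₀ ℕ) (hd : d ≠ 0) :
    ∃ j d', d = Finsupp.single j 1 + d' ∧ (d'.sum fun _ k => k) + 1 = d.sum fun _ k => k := by
  obtain ⟨j, hj⟩ := Finsupp.support_nonempty_iff.mpr hd
  have hpos : 0 < d j := Nat.pos_of_ne_zero (Finsupp.mem_support_iff.mp hj)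
  have hdecomp : d = Finsupp.single j 1 + (d - Finsupp.single j 1) := by
    ext i
    simp only [Finsupp.add_apply, Finsupp.tsub_apply, Finsupp.single_apply]
    split_ifs with h
    · subst h; omega
    · omega
  refine ⟨j, d - Finsupp.single j 1, hdecomp, ?_⟩
  conv_rhs => rw [hdecomp]
  rw [Finsupp.sum_add_index' (fun _ => rfl) (fun _ _ _ => rfl),
    Finsupp.sum_single_index rfl]
  omega

lemma mono_quad : ∀ (n : ℕ) (d : Fin t →₀ ℕ), (d.sum fun _ k => k) ≤ n →
    ∀ a u v : Fin t → ℤ_[p],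
    ‖mono d (a + u) - mono d (a + v) - linPart d a (u - v)‖
      ≤ max ‖u‖ ‖v‖ * ‖u - v‖ := by
  have base : ∀ a u v : Fin t → ℤ_[p],
      ‖mono (0 : Fin t →₀ ℕ) (a + u) - mono 0 (a + v) - linPart 0 a (u - v)‖
        ≤ max ‖u‖ ‖v‖ * ‖u - v‖ := by
    intro a u v
    have h1 : mono (0 : Fin t →₀ ℕ) (a + u) = 1 := by simp [mono]
    have h2 : mono (0 : Fin t →₀ ℕ) (a + v) = 1 := by simp [mono]
    have h3 : linPart (0 : Fin t →₀ ℕ) a (u - v) = 0 := by simp [linPart]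
    rw [h1, h2, h3, sub_self, sub_zero, norm_zero]
    exact mul_nonneg (le_max_iff.mpr (Or.inl (norm_nonneg u))) (norm_nonneg _)
  intro n
  induction n with
  | zero =>
    intro d hd a u v
    have hd0 : d = 0 := by
      by_contra h
      obtain ⟨j, d', hdec, hsum⟩ := exists_decomp d h
      omega
    subst hd0; exact base a u v
  | succ n ih =>
    intro d hd a u v
    by_cases h0 : d = 0
    · subst h0; exact base a u v
    obtain ⟨j0, d', hdec, hsum⟩ := exists_decomp d h0
    subst hdec
    have hd' : (d'.sum fun _ k => k) ≤ n := by omega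
    have ihd := ih d' hd' a u v
    rw [mono_single_add, mono_single_add, linPart_single_add]
    have hidentity :
        (a + u) j0 * mono d' (a + u) - (a + v) j0 * mono d' (a + v)
          - (a j0 * linPart d' a (u - v) + mono d' a * (u - v) j0)
        = a j0 * (mono d' (a + u) - mono d' (a + v) - linPart d' a (u - v))
          + (u j0 * (mono d' (a + u) - mono d' (a + v))
          + (u j0 - v j0) * (mono d' (a + v) - mono d' a)) := by
      simp only [Pi.add_apply, Pi.sub_apply]; ring
    rw [hidentity]
    have hmax0 : (0:ℝ) ≤ max ‖u‖ ‖v‖ := le_max_iff.mpr (Or.inl (norm_nonneg u))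
    have hb1 : ‖a j0 * (mono d' (a + u) - mono d' (a + v) - linPart d' a (u - v))‖
        ≤ max ‖u‖ ‖v‖ * ‖u - v‖ := (norm_le_of_dvd (dvd_mul_left _ _)).trans ihd
    have hXY : ‖mono d' (a + u) - mono d' (a + v)‖ ≤ ‖u - v‖ := by
      have h := mono_lip d' (a + u) (a + v)
      rwa [add_sub_add_left_eq_sub] at h
    have hb2 : ‖u j0 * (mono d' (a + u) - mono d' (a + v))‖
        ≤ max ‖u‖ ‖v‖ * ‖u - v‖ := by
      refine (norm_mul_le _ _).trans ?_
      exact mul_le_mul ((norm_le_pi_norm u j0).trans (le_max_left _ _)) hXY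
        (norm_nonneg _) hmax0
    have hYZ : ‖mono d' (a + v) - mono d' a‖ ≤ ‖v‖ := by
      have h := mono_lip d' (a + v) a
      rwa [add_sub_cancel_left] at h
    have hb3 : ‖(u j0 - v j0) * (mono d' (a + v) - mono d' a)‖
        ≤ max ‖u‖ ‖v‖ * ‖u - v‖ := by
      refine (norm_mul_le _ _).trans ?_
      rw [mul_comm (max ‖u‖ ‖v‖) (‖u - v‖)]
      refine mul_le_mul ?_ (hYZ.trans (le_max_right _ _)) (norm_nonneg _) (norm_nonneg _)
      exact norm_le_pi_norm (u - v) j0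
    exact (norm_add_le_max _ _).trans (max_le hb1
      ((norm_add_le_max _ _).trans (max_le hb2 hb3)))

section Series

variable (g : MvPowerSeries (Fin t) ℤ_[p])

lemma eval_eq (x : Fin t → ℤ_[p]) :
    mvSeriesEval p g x = ∑' d, MvPowerSeries.coeff d g * mono d x := rfl

lemma pderiv_coeff (j : Fin t) (d : Fin t →₀ ℕ) :
    MvPowerSeries.coeff d (mvSeriesPDeriv p j g)
      = ((d j + 1 : ℕ) : ℤ_[p]) * MvPowerSeries.coeff (d + Finsupp.single j 1) g := rfl

variable {g}

lemma summable_aux {c : (Fin t →₀ ℕ) → ℤ_[p]}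
    (hc : Tendsto (fun d => ‖c d‖) cofinite (𝓝 0))
    {h : (Fin t →₀ ℕ) → ℤ_[p]} (hh : ∀ d, ‖h d‖ ≤ ‖c d‖) : Summable h :=
  NonarchimedeanAddGroup.summable_of_tendsto_cofinite_zero (squeeze_zero_norm hh hc)

lemma summable_coeff_bound
    (hg : Tendsto (fun d => ‖MvPowerSeries.coeff d g‖) cofinite (𝓝 0)) {h : (Fin t →₀ ℕ) → ℤ_[p]}
    (hh : ∀ d, ‖h d‖ ≤ ‖MvPowerSeries.coeff d g‖) : Summable h :=
  summable_aux hg hh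

lemma deriv_eval
    (hg : Tendsto (fun d => ‖MvPowerSeries.coeff d g‖) cofinite (𝓝 0)) (j : Fin t) (a : Fin t → ℤ_[p]) :
    mvSeriesEval p (mvSeriesPDeriv p j g) a
      = ∑' d, (d j : ℤ_[p]) * MvPowerSeries.coeff d g
          * mono (d - Finsupp.single j 1) a := by
  have hinj : Function.Injective (fun e : Fin t →₀ ℕ => e + Finsupp.single j 1) :=
    add_left_injective _
  set F : (Fin t →₀ ℕ) → ℤ_[p] := fun d =>
    (d j : ℤ_[p]) * MvPowerSeries.coeff d g * mono (d - Finsupp.single j 1) a with hF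
  have hsupp : Function.support F ⊆ Set.range (fun e : Fin t →₀ ℕ => e + Finsupp.single j 1) := by
    intro d hd
    by_contra hdr
    apply hd
    have hdj : d j = 0 := by
      by_contra hdj
      exact hdr ⟨d - Finsupp.single j 1, by
        ext i
        simp only [Finsupp.add_apply, Finsupp.tsub_apply, Finsupp.single_apply]
        split_ifs with h
        · subst h; omega
        · omega⟩
    simp [hF, hdj]
  have key := hinj.tsum_eq hsupp
  calc mvSeriesEval p (mvSeriesPDeriv p j g) a
      = ∑' e, F (e + Finsupp.single j 1) := by
        rw [eval_eq]
        refine tsum_congr fun e => ?_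
        rw [pderiv_coeff]
        simp only [hF, Finsupp.add_apply, Finsupp.single_apply, if_pos rfl,
          add_tsub_cancel_right]
        push_cast
        rfl
    _ = ∑' d, F d := key

lemma lin_eval
    (hg : Tendsto (fun d => ‖MvPowerSeries.coeff d g‖) cofinite (𝓝 0))
    (a w : Fin t → ℤ_[p]) :
    ∑ j, mvSeriesEval p (mvSeriesPDeriv p j g) a * w j
      = ∑' d, MvPowerSeries.coeff d g * linPart d a w := by
  have hsummand : ∀ j : Fin t, Summable (fun d : Fin t →₀ ℕ =>
      (d j : ℤ_[p]) * MvPowerSeries.coeff d g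
        * mono (d - Finsupp.single j 1) a * w j) := by
    intro j
    refine summable_coeff_bound hg fun d => norm_le_of_dvd ⟨(d j : ℤ_[p])
      * mono (d - Finsupp.single j 1) a * w j, by ring⟩
  calc ∑ j, mvSeriesEval p (mvSeriesPDeriv p j g) a * w j
      = ∑ j, ∑' d, (d j : ℤ_[p]) * MvPowerSeries.coeff d g
          * mono (d - Finsupp.single j 1) a * w j := by
        refine Finset.sum_congr rfl fun j _ => ?_
        rw [deriv_eval hg j a]
        have Sj : Summable (fun d : Fin t →₀ ℕ => (d j : ℤ_[p])
            * MvPowerSeries.coeff d g * mono (d - Finsupp.single j 1) a) :=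
          summable_coeff_bound hg fun d => norm_le_of_dvd ⟨(d j : ℤ_[p])
            * mono (d - Finsupp.single j 1) a, by ring⟩
        exact (Sj.tsum_mul_right (w j)).symm
    _ = ∑' d, ∑ j, (d j : ℤ_[p]) * MvPowerSeries.coeff d g
          * mono (d - Finsupp.single j 1) a * w j :=
        (Summable.tsum_finsetSum fun j _ => hsummand j).symm
    _ = ∑' d, MvPowerSeries.coeff d g * linPart d a w := by
        refine tsum_congr fun d => ?_
        rw [linPart, Finset.mul_sum]
        exact Finset.sum_congr rfl fun j _ => by ring

lemma eval_taylor
    (hg : Tendsto (fun d => ‖MvPowerSeries.coeff d g‖) cofinite (𝓝 0))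
    (a u v : Fin t → ℤ_[p]) :
    ‖mvSeriesEval p g (a + u) - mvSeriesEval p g (a + v)
      - ∑ j, mvSeriesEval p (mvSeriesPDeriv p j g) a * (u j - v j)‖
      ≤ max ‖u‖ ‖v‖ * ‖u - v‖ := by
  have hmax0 : (0:ℝ) ≤ max ‖u‖ ‖v‖ * ‖u - v‖ :=
    mul_nonneg (le_max_iff.mpr (Or.inl (norm_nonneg u))) (norm_nonneg _)
  have hS1 : Summable (fun d => MvPowerSeries.coeff d g * mono d (a + u)) :=
    summable_coeff_bound hg fun d => norm_le_of_dvd (dvd_mul_right _ _)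
  have hS2 : Summable (fun d => MvPowerSeries.coeff d g * mono d (a + v)) :=
    summable_coeff_bound hg fun d => norm_le_of_dvd (dvd_mul_right _ _)
  have hS3 : Summable (fun d => MvPowerSeries.coeff d g * linPart d a (u - v)) :=
    summable_coeff_bound hg fun d => norm_le_of_dvd (dvd_mul_right _ _)
  have hsum : ∑ j, mvSeriesEval p (mvSeriesPDeriv p j g) a * (u j - v j)
      = ∑' d, MvPowerSeries.coeff d g * linPart d a (u - v) := by
    rw [← lin_eval hg a (u - v)]
    exact Finset.sum_congr rfl fun j _ => by rw [Pi.sub_apply]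
  rw [hsum, eval_eq, eval_eq, ← Summable.tsum_sub hS1 hS2, ← Summable.tsum_sub (hS1.sub hS2) hS3]
  refine IsUltrametricDist.norm_tsum_le_of_forall_le_of_nonneg hmax0 fun d => ?_
  have hfac : MvPowerSeries.coeff d g * mono d (a + u)
      - MvPowerSeries.coeff d g * mono d (a + v)
      - MvPowerSeries.coeff d g * linPart d a (u - v)
      = MvPowerSeries.coeff d g
        * (mono d (a + u) - mono d (a + v) - linPart d a (u - v)) := by ring
  rw [hfac]
  exact (norm_le_of_dvd (dvd_mul_left _ _)).trans
    (mono_quad (d.sum fun _ k => k) d le_rfl a u v)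

end Series


section QpHelpers

variable {p : ℕ} [Fact p.Prime] {t : ℕ}

lemma pi_coe_norm (z : Fin t → ℤ_[p]) :
    ‖(fun i => (z i : ℚ_[p]))‖ = ‖z‖ := by
  rfl

lemma mulVec_norm_le (M : Matrix (Fin t) (Fin t) ℚ_[p]) {C : ℝ} (hC : 0 ≤ C)
    (hM : ∀ i j, ‖M i j‖ ≤ C) (w : Fin t → ℚ_[p]) : ‖M.mulVec w‖ ≤ C * ‖w‖ := by
  rw [pi_norm_le_iff_of_nonneg (mul_nonneg hC (norm_nonneg w))]
  intro i
  simp only [Matrix.mulVec, dotProduct]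
  refine IsUltrametricDist.norm_sum_le_of_forall_le_of_nonneg
    (mul_nonneg hC (norm_nonneg w)) fun j _ => ?_
  rw [norm_mul]
  exact mul_le_mul (hM i j) (norm_le_pi_norm w j) (norm_nonneg _) hC

lemma pi_norm_add_le_max (x y : Fin t → ℚ_[p]) : ‖x + y‖ ≤ max ‖x‖ ‖y‖ := by
  rw [pi_norm_le_iff_of_nonneg (le_max_iff.mpr (Or.inl (norm_nonneg x)))]
  intro i
  exact (IsUltrametricDist.norm_add_le_max _ _).trans
    (max_le_max (norm_le_pi_norm x i) (norm_le_pi_norm y i))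

end QpHelpers

end MAHensel

open MAHensel in
/-- Multivariate analytic Hensel's lemma: for a system `f = (f₁, …, f_t)` of restricted
power series with `det J_f(a) ≠ 0` and `v(fᵢ(a)) > 2 v(det J_f(a)) + r` (stated via
norms), there is a unique `b` with `f(b) = 0` and `v(bᵢ − aᵢ) > v(det J_f(a)) + r`. -/
theorem multivariate_analytic_hensel (p : ℕ) [Fact p.Prime] (t : ℕ)
    (f : Fin t → MvPowerSeries (Fin t) ℤ_[p])
    (hres : ∀ i, Filter.Tendsto (fun d : Fin t →₀ ℕ => ‖MvPowerSeries.coeff d (f i)‖)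
      Filter.cofinite (nhds 0))
    (r : ℕ) (a : Fin t → ℤ_[p])
    (hJ : (Matrix.of fun i j => mvSeriesEval p (mvSeriesPDeriv p j (f i)) a).det ≠ 0)
    (hval : ∀ i, ‖mvSeriesEval p (f i) a‖ <
      ‖(Matrix.of fun i j => mvSeriesEval p (mvSeriesPDeriv p j (f i)) a).det‖ ^ 2 *
        (p : ℝ) ^ (-(r : ℤ))) :
    ∃! b : Fin t → ℤ_[p], (∀ i, mvSeriesEval p (f i) b = 0) ∧
      ∀ i, ‖b i - a i‖ <
        ‖(Matrix.of fun i j => mvSeriesEval p (mvSeriesPDeriv p j (f i)) a).det‖ *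
          (p : ℝ) ^ (-(r : ℤ)) := by
  classical
  obtain ⟨hp⟩ := (inferInstance : Fact p.Prime)
  set J : Matrix (Fin t) (Fin t) ℤ_[p] :=
    Matrix.of fun i j => mvSeriesEval p (mvSeriesPDeriv p j (f i)) a with hJdef
  set δ : ℤ_[p] := J.det with hδdef
  have hp1 : (1:ℝ) < p := by exact_mod_cast hp.one_lt
  have hp0 : (0:ℝ) < p := lt_trans one_pos hp1
  set m : ℤ := (δ.valuation : ℤ) with hm
  have hm0 : 0 ≤ m := Int.natCast_nonneg _
  have hnδ : ‖δ‖ = (p:ℝ) ^ (-m) := PadicInt.norm_eq_zpow_neg_valuation hJ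
  set ε : ℝ := (p:ℝ) ^ (-(m + r + 1)) with hε
  have hεpos : 0 < ε := zpow_pos hp0 _
  have hεle1 : ε ≤ 1 := by
    calc ε ≤ (p:ℝ) ^ (0:ℤ) := zpow_le_zpow_right₀ hp1.le (by omega)
    _ = 1 := zpow_zero _
  have hδε : ‖δ‖ * ε = (p:ℝ) ^ (-(2*m + (r:ℤ) + 1)) := by
    rw [hnδ, hε, ← zpow_add₀ hp0.ne']
    congr 1
    ring
  have hδpr : ‖δ‖ * (p:ℝ) ^ (-(r:ℤ)) = (p:ℝ) ^ (-(m + (r:ℤ))) := by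
    rw [hnδ, ← zpow_add₀ hp0.ne']
    congr 1
    ring
  have hval' : ∀ i, ‖mvSeriesEval p (f i) a‖ ≤ ‖δ‖ * ε := by
    intro i
    rw [hδε, PadicInt.norm_le_pow_iff_norm_lt_pow_add_one]
    have h2 : ‖δ‖^2 * (p:ℝ) ^ (-(r:ℤ)) = (p:ℝ) ^ ((-(2*m + (r:ℤ) + 1)) + 1) := by
      rw [hnδ, ← zpow_natCast ((p:ℝ) ^ (-m)) 2, ← zpow_mul, ← zpow_add₀ hp0.ne']
      congr 1
      push_cast
      ring
    rw [← h2]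
    exact hval i
  -- ℚ_p side
  set emb : (Fin t → ℤ_[p]) → (Fin t → ℚ_[p]) := fun z i => (z i : ℚ_[p]) with hemb
  have hembinj : Function.Injective emb := by
    intro z w h
    funext i
    exact Subtype.coe_injective (congrFun h i)
  have hembsub : ∀ z w, emb z - emb w = emb (z - w) := by
    intro z w
    funext i
    simp [hemb]
  have hembnorm : ∀ z, ‖emb z‖ = ‖z‖ := fun z => pi_coe_norm z
  have hemb0 : emb 0 = 0 := by
    funext i
    simp [hemb]
  set Jq : Matrix (Fin t) (Fin t) ℚ_[p] := (PadicInt.Coe.ringHom (p := p)).mapMatrix J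
    with hJq
  have hdetq : Jq.det = (δ : ℚ_[p]) := (RingHom.map_det _ J).symm
  have hdetq_ne : Jq.det ≠ 0 := by
    rw [hdetq]
    exact fun h => hJ (Subtype.coe_injective h)
  have hunit : IsUnit Jq.det := isUnit_iff_ne_zero.mpr hdetq_ne
  have hBA : ∀ w : Fin t → ℚ_[p], Jq⁻¹.mulVec (Jq.mulVec w) = w := by
    intro w
    rw [Matrix.mulVec_mulVec, Matrix.nonsing_inv_mul _ hunit, Matrix.one_mulVec]
  have hAB : ∀ w : Fin t → ℚ_[p], Jq.mulVec (Jq⁻¹.mulVec w) = w := by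
    intro w
    rw [Matrix.mulVec_mulVec, Matrix.mul_nonsing_inv _ hunit, Matrix.one_mulVec]
  have hinv_entry : ∀ i j, ‖Jq⁻¹ i j‖ ≤ (p:ℝ) ^ m := by
    intro i j
    rw [Matrix.inv_def, Matrix.smul_apply, smul_eq_mul, norm_mul]
    have h1 : ‖Ring.inverse Jq.det‖ = (p:ℝ) ^ m := by
      rw [Ring.inverse_eq_inv, norm_inv, hdetq, ← PadicInt.norm_def, hnδ, ← zpow_neg,
        neg_neg]
    have h2 : ‖Jq.adjugate i j‖ ≤ 1 := by
      have hadj : Jq.adjugate = (PadicInt.Coe.ringHom (p := p)).mapMatrix J.adjugate := by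
        rw [hJq, RingHom.map_adjugate]
      rw [hadj, RingHom.mapMatrix_apply, Matrix.map_apply]
      have h3 : ‖((J.adjugate i j : ℤ_[p]) : ℚ_[p])‖ ≤ 1 := by
        rw [← PadicInt.norm_def]
        exact PadicInt.norm_le_one _
      exact h3
    rw [h1]
    calc (p:ℝ) ^ m * ‖Jq.adjugate i j‖ ≤ (p:ℝ) ^ m * 1 :=
          mul_le_mul_of_nonneg_left h2 (by positivity)
    _ = (p:ℝ) ^ m := mul_one _
  set toZ : (Fin t → ℚ_[p]) → (Fin t → ℤ_[p]) :=
    fun x i => if h : ‖x i‖ ≤ 1 then (⟨x i, h⟩ : ℤ_[p]) else 0 with htoZ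
  have htoZemb : ∀ z : Fin t → ℤ_[p], toZ (emb z) = z := by
    intro z
    funext i
    simp only [htoZ, hemb]
    exact dif_pos (z i).2
  set Fq : (Fin t → ℚ_[p]) → (Fin t → ℚ_[p]) :=
    fun x => emb (fun i => mvSeriesEval p (f i) (toZ x)) with hFq
  set Φ : (Fin t → ℚ_[p]) → (Fin t → ℚ_[p]) := fun x => x - Jq⁻¹.mulVec (Fq x) with hΦ
  set s : Set (Fin t → ℚ_[p]) := Metric.closedBall (emb a) ε with hs
  have hJqmul : ∀ w : Fin t → ℤ_[p],
      Jq.mulVec (emb w) = emb (fun i => ∑ j, J i j * w j) := by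
    intro w
    funext i
    simp only [Matrix.mulVec, dotProduct, hemb, hJq, RingHom.mapMatrix_apply,
      Matrix.map_apply]
    rw [show ((∑ j, J i j * w j : ℤ_[p]) : ℚ_[p])
        = PadicInt.Coe.ringHom (p := p) (∑ j, J i j * w j) from rfl, map_sum]
    refine Finset.sum_congr rfl fun j _ => ?_
    rw [map_mul]
    rfl
  have hmax00 : ∀ u v : Fin t → ℤ_[p], (0:ℝ) ≤ max ‖u‖ ‖v‖ * ‖u - v‖ := fun u v =>
    mul_nonneg (le_max_iff.mpr (Or.inl (norm_nonneg u))) (norm_nonneg _)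
  have hT : ∀ u v : Fin t → ℤ_[p],
      ‖Fq (emb (a + u)) - Fq (emb (a + v)) - Jq.mulVec (emb (a + u) - emb (a + v))‖
        ≤ max ‖u‖ ‖v‖ * ‖u - v‖ := by
    intro u v
    have h1 : emb (a + u) - emb (a + v) = emb (u - v) := by
      rw [hembsub]
      congr 1
      abel
    have h2 : Fq (emb (a + u)) = emb (fun i => mvSeriesEval p (f i) (a + u)) := by
      simp only [hFq, htoZemb]
    have h3 : Fq (emb (a + v)) = emb (fun i => mvSeriesEval p (f i) (a + v)) := by
      simp only [hFq, htoZemb]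
    rw [h1, hJqmul, h2, h3, hembsub, hembsub, hembnorm]
    rw [pi_norm_le_iff_of_nonneg (hmax00 u v)]
    intro i
    have heq : ((fun i => mvSeriesEval p (f i) (a + u)) - (fun i => mvSeriesEval p (f i) (a + v))
          - fun i => ∑ j, J i j * (u - v) j) i
        = mvSeriesEval p (f i) (a + u) - mvSeriesEval p (f i) (a + v)
          - ∑ j, mvSeriesEval p (mvSeriesPDeriv p j (f i)) a * (u j - v j) := rfl
    rw [heq]
    exact eval_taylor (hres i) a u v
  have hFa : ‖Fq (emb a)‖ ≤ ‖δ‖ * ε := by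
    have h2 : Fq (emb a) = emb (fun i => mvSeriesEval p (f i) a) := by
      simp only [hFq, htoZemb]
    rw [h2, hembnorm,
      pi_norm_le_iff_of_nonneg (mul_nonneg (norm_nonneg δ) hεpos.le)]
    exact fun i => hval' i
  have hmem_u : ∀ x ∈ s, ∃ u : Fin t → ℤ_[p], ‖u‖ ≤ ε ∧ x = emb (a + u) := by
    intro x hx
    have hd : ‖x - emb a‖ ≤ ε := by
      rw [← dist_eq_norm]
      exact Metric.mem_closedBall.mp hx
    have hc : ∀ i, ‖x i‖ ≤ 1 := by
      intro i
      have h1 : ‖x i - emb a i‖ ≤ ε := (norm_le_pi_norm (x - emb a) i).trans hd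
      have h2 : x i = (x i - emb a i) + emb a i := by ring
      rw [h2]
      refine (IsUltrametricDist.norm_add_le_max _ _).trans (max_le (h1.trans hεle1) ?_)
      have h3 : ‖((a i : ℤ_[p]) : ℚ_[p])‖ ≤ 1 := by
        rw [← PadicInt.norm_def]
        exact PadicInt.norm_le_one _
      exact h3
    have hx' : emb (toZ x) = x := by
      funext i
      simp only [htoZ, hemb]
      exact congrArg Subtype.val (dif_pos (hc i))
    refine ⟨toZ x - a, ?_, ?_⟩
    · rw [← hembnorm, ← hembsub, hx']
      exact hd
    · have h12 : a + (toZ x - a) = toZ x := by abel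
      rw [h12]
      exact hx'.symm
  have hmaps : Set.MapsTo Φ s s := by
    intro x hx
    obtain ⟨u, hu, rfl⟩ := hmem_u x hx
    set Err := Fq (emb (a + u)) - Fq (emb a) - Jq.mulVec (emb (a + u) - emb a) with hErr
    have hdecomp : Φ (emb (a + u)) - emb a = -(Jq⁻¹.mulVec (Err + Fq (emb a))) := by
      have h3 : Fq (emb (a + u)) = Err + Fq (emb a) + Jq.mulVec (emb (a + u) - emb a) := by
        rw [hErr]; abel
      simp only [hΦ]
      rw [h3, Matrix.mulVec_add, Matrix.mulVec_add, hBA]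
      abel
    have hErrB : ‖Err‖ ≤ ε * ε := by
      have h4 := hT u 0
      rw [add_zero] at h4
      simp only [norm_zero, sub_zero, max_eq_left (norm_nonneg u)] at h4
      exact (hErr ▸ h4).trans (mul_le_mul hu hu (norm_nonneg u) hεpos.le)
    have hsum_le : ‖Err + Fq (emb a)‖ ≤ (p:ℝ) ^ (-(2*m + (r:ℤ) + 1)) := by
      refine (pi_norm_add_le_max _ _).trans (max_le ?_ ?_)
      · refine hErrB.trans ?_
        rw [hε, ← zpow_add₀ hp0.ne']
        exact zpow_le_zpow_right₀ hp1.le (by omega)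
      · exact hFa.trans (le_of_eq hδε)
    have hfinal : ‖Φ (emb (a + u)) - emb a‖ ≤ ε := by
      rw [hdecomp, norm_neg]
      refine (mulVec_norm_le _ (by positivity) hinv_entry _).trans ?_
      refine (mul_le_mul_of_nonneg_left hsum_le (by positivity)).trans ?_
      rw [← zpow_add₀ hp0.ne', hε]
      exact zpow_le_zpow_right₀ hp1.le (by omega)
    rw [hs, Metric.mem_closedBall, dist_eq_norm]
    exact hfinal
  have hcontr : ∀ x ∈ s, ∀ y ∈ s, ‖Φ x - Φ y‖ ≤ (p:ℝ)⁻¹ * ‖x - y‖ := by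
    intro x hx y hy
    obtain ⟨u, hu, rfl⟩ := hmem_u x hx
    obtain ⟨v, hv, rfl⟩ := hmem_u y hy
    have hxy : Φ (emb (a + u)) - Φ (emb (a + v))
        = -(Jq⁻¹.mulVec (Fq (emb (a + u)) - Fq (emb (a + v))
            - Jq.mulVec (emb (a + u) - emb (a + v)))) := by
      simp only [hΦ]
      rw [Matrix.mulVec_sub, Matrix.mulVec_sub, hBA]
      abel
    rw [hxy, norm_neg]
    refine (mulVec_norm_le _ (by positivity) hinv_entry _).trans ?_
    have hnorm_uv : ‖u - v‖ = ‖emb (a + u) - emb (a + v)‖ := by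
      have h1 : emb (a + u) - emb (a + v) = emb (u - v) := by
        rw [hembsub]
        congr 1
        abel
      rw [h1, hembnorm]
    have hTuv := hT u v
    rw [hnorm_uv] at hTuv
    calc (p:ℝ) ^ m * ‖Fq (emb (a + u)) - Fq (emb (a + v))
            - Jq.mulVec (emb (a + u) - emb (a + v))‖
        ≤ (p:ℝ) ^ m * (ε * ‖emb (a + u) - emb (a + v)‖) := by
          refine mul_le_mul_of_nonneg_left ?_ (by positivity)
          exact hTuv.trans (mul_le_mul_of_nonneg_right (max_le hu hv) (norm_nonneg _))
    _ ≤ (p:ℝ)⁻¹ * ‖emb (a + u) - emb (a + v)‖ := by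
          rw [← mul_assoc]
          refine mul_le_mul_of_nonneg_right ?_ (norm_nonneg _)
          rw [hε, ← zpow_add₀ hp0.ne']
          calc (p:ℝ) ^ (m + -(m + (r:ℤ) + 1)) ≤ (p:ℝ) ^ (-1 : ℤ) :=
                zpow_le_zpow_right₀ hp1.le (by omega)
          _ = (p:ℝ)⁻¹ := zpow_neg_one _
  set K : NNReal := (p : NNReal)⁻¹ with hKdef
  have hKcoe : (K : ℝ) = (p:ℝ)⁻¹ := by
    rw [hKdef]
    push_cast
    rfl
  have hK1 : K < 1 := by
    rw [← NNReal.coe_lt_coe, hKcoe, NNReal.coe_one]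
    rw [inv_lt_one_iff₀]
    right
    exact hp1
  have hsc : IsComplete s := Metric.isClosed_closedBall.isComplete
  have hΦlip : ContractingWith K (Set.MapsTo.restrict Φ s s hmaps) := by
    refine ⟨hK1, LipschitzWith.of_dist_le_mul fun x y => ?_⟩
    rw [Subtype.dist_eq, Set.MapsTo.val_restrict_apply, Set.MapsTo.val_restrict_apply,
      dist_eq_norm, Subtype.dist_eq, dist_eq_norm, hKcoe]
    exact hcontr x.1 x.2 y.1 y.2
  obtain ⟨y, hy_mem, hy_fix, -, -⟩ := hΦlip.exists_fixedPoint' hsc hmaps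
    (Metric.mem_closedBall_self hεpos.le) (edist_ne_top _ _)
  obtain ⟨ub, hub, hyeq⟩ := hmem_u y hy_mem
  set b : Fin t → ℤ_[p] := a + ub with hb
  have hFq0 : Fq y = 0 := by
    have h1 : Jq⁻¹.mulVec (Fq y) = 0 := by
      have h2 : Φ y = y := hy_fix
      simp only [hΦ] at h2
      exact sub_eq_self.mp h2
    calc Fq y = Jq.mulVec (Jq⁻¹.mulVec (Fq y)) := (hAB _).symm
    _ = Jq.mulVec 0 := by rw [h1]
    _ = 0 := Matrix.mulVec_zero _
  have hfb : ∀ i, mvSeriesEval p (f i) b = 0 := by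
    intro i
    have h3 : emb (fun i => mvSeriesEval p (f i) b) = 0 := by
      have h4 : Fq (emb b) = emb (fun i => mvSeriesEval p (f i) b) := by
        simp only [hFq, htoZemb]
      rw [← h4, ← hyeq, hFq0]
    have h5 : (fun i => mvSeriesEval p (f i) b) = 0 := by
      apply hembinj
      rw [h3, hemb0]
    exact congrFun h5 i
  have hεlt : ε < ‖δ‖ * (p:ℝ) ^ (-(r:ℤ)) := by
    rw [hδpr, hε]
    exact zpow_lt_zpow_right₀ hp1 (by omega)
  have hnb : ∀ i, ‖b i - a i‖ < ‖δ‖ * (p:ℝ) ^ (-(r:ℤ)) := by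
    intro i
    have h5 : b i - a i = ub i := by
      rw [hb]
      simp
    rw [h5]
    refine lt_of_le_of_lt ?_ hεlt
    exact (norm_le_pi_norm ub i).trans hub
  have hbmem : emb b ∈ s := by
    rw [← hyeq]
    exact hy_mem
  refine ⟨b, ⟨hfb, hnb⟩, ?_⟩
  rintro b' ⟨hfb', hnb'⟩
  have hb'mem : emb b' ∈ s := by
    rw [hs, Metric.mem_closedBall, dist_eq_norm, hembsub, hembnorm,
      pi_norm_le_iff_of_nonneg hεpos.le]
    intro i
    have h6 := hnb' i
    rw [hδpr] at h6
    have h7 : ‖b' i - a i‖ ≤ (p:ℝ) ^ (-(m + (r:ℤ)) - 1) := by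
      rw [PadicInt.norm_le_pow_iff_norm_lt_pow_add_one, sub_add_cancel]
      exact h6
    have h8 : (b' - a) i = b' i - a i := rfl
    rw [h8]
    refine h7.trans (le_of_eq ?_)
    rw [hε]
    congr 1
    ring
  have hΦb' : Φ (emb b') = emb b' := by
    have h9 : Fq (emb b') = 0 := by
      simp only [hFq, htoZemb]
      have h10 : (fun i => mvSeriesEval p (f i) b') = 0 := funext fun i => hfb' i
      rw [h10, hemb0]
    simp only [hΦ]
    rw [h9, Matrix.mulVec_zero, sub_zero]
  have hΦb : Φ (emb b) = emb b := by
    rw [← hyeq]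
    exact hy_fix
  have h11 : ‖emb b' - emb b‖ ≤ (p:ℝ)⁻¹ * ‖emb b' - emb b‖ := by
    calc ‖emb b' - emb b‖ = ‖Φ (emb b') - Φ (emb b)‖ := by rw [hΦb', hΦb]
    _ ≤ (p:ℝ)⁻¹ * ‖emb b' - emb b‖ := hcontr _ hb'mem _ hbmem
  have hpinv1 : (p:ℝ)⁻¹ < 1 := by
    rw [inv_lt_one_iff₀]
    right
    exact hp1
  have h12 : ‖emb b' - emb b‖ = 0 := by
    nlinarith [norm_nonneg (emb b' - emb b)]
  apply hembinj
  rw [← sub_eq_zero]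
  exact norm_eq_zero.mp h12
end
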